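/- In the setting of the preceding representation theorem, suppose moreover that H : U → ℝ is a C² function with ∂ᵢH = η̄ᵢ for all i ∈ {1,…,n}, where η̄ⱼ = (u²)^{−d}∂_{z^{j−2}}f for j ≥ 3, η̄₂ = (u²)^{−d}(−Σⱼ z^j∂_{z^j}f − (d−1)f + C₂), and η̄₁ = (u²)^{−d}(−Σ_{α=2}^r ∂_{z^{1(α)−2}}f + C₁) with d·C₁ = 0. Then there exists a constant C₃ such that on U: H = (u²)^{1−d}·f(z¹,…,z^{n−2}) + C₂·φ(u²) + C₁·u¹ + C₃, where φ(u²) = (u²)^{1−d}/(1−d) if d ≠ 1 and φ(u²) = ln u² if d = 1. -/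

import Mathlib

open Classical

/-- Partial derivative of `g : (Fin n → ℝ) → ℝ` with respect to the `i`-th coordinate. -/
noncomputable def pd {n : ℕ} (g : (Fin n → ℝ) → ℝ) (i : Fin n) (u : Fin n → ℝ) : ℝ :=
  deriv (fun t => g (Function.update u i t)) (u i)

/-- `ε_{j+2}`: equals `1` if the (0-based) coordinate index `j+2` is the first index
`1(α)` of some Jordan block with `α ≥ 2`, and `0` otherwise.  Here `S α` is the
0-based index of the first coordinate of the `α`-th block. -/
noncomputable def eps (p r : ℕ) (S : Fin r → Fin (p + 2)) (j : Fin p) : ℝ :=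
  if ∃ α : Fin r, (α : ℕ) ≠ 0 ∧ (S α : ℕ) = (j : ℕ) + 2 then 1 else 0

/-- The variables `z^j = (u^{j+2} − u¹·ε_{j+2})/u²` (0-based: `u 0 = u¹`, `u 1 = u²`). -/
noncomputable def zc (p r : ℕ) (S : Fin r → Fin (p + 2)) (u : Fin (p + 2) → ℝ) :
    Fin p → ℝ :=
  fun j => (u j.succ.succ - u 0 * eps p r S j) / u 1

lemma clm_sum {n : ℕ} (ℓ : (Fin n → ℝ) →L[ℝ] ℝ) (v : Fin n → ℝ) :
    ℓ v = ∑ i, v i * ℓ (Pi.single i 1) := by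
  have hv : v = ∑ i : Fin n, v i • (Pi.single i 1 : Fin n → ℝ) := by
    ext k
    simp [Pi.single_apply, Finset.sum_ite_eq]
  conv_lhs => rw [hv]
  rw [map_sum]
  simp [smul_eq_mul]

lemma pd_eq_fderiv {n : ℕ} (g : (Fin n → ℝ) → ℝ) (i : Fin n) (u : Fin n → ℝ)
    (hg : DifferentiableAt ℝ g u) : pd g i u = fderiv ℝ g u (Pi.single i 1) := by
  have hup : HasDerivAt (fun t => Function.update u i t) (Pi.single i (1:ℝ)) (u i) :=
    hasDerivAt_update u i (u i)
  have hg' : HasFDerivAt g (fderiv ℝ g u) (Function.update u i (u i)) := by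
    rw [Function.update_eq_self]; exact hg.hasFDerivAt
  have := (HasFDerivAt.comp_hasDerivAt (u i) hg' hup).deriv
  simpa [pd, Function.comp_def] using this

/-- the metric potential `H`, whose partial derivatives are the metric
entries `η̄ᵢ` given by the representation theorem in terms of `f`, `C₁`, `C₂`, equals
`(u²)^{1−d}·f(z) + C₂·φ(u²) + C₁·u¹ + C₃` with `φ(t) = t^{1−d}/(1−d)` for `d ≠ 1` and
`φ(t) = ln t` for `d = 1`.  Here `n = p + 2`, `r = q + 1`, `S α` is the 0-based index
of the first coordinate `1(α)` of the `α`-th Jordan block, and indices are 0-based: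
`∂₁H = pd H 0`, `∂₂H = pd H 1`, `∂_{j+3}H = pd H j.succ.succ` for `j : Fin p`. -/
theorem stmt_5 (p q : ℕ)
    (m : Fin (q + 1) → ℕ) (hm : ∀ α, 1 ≤ m α) (hm0 : 2 ≤ m 0)
    (hn : p + 2 = ∑ α, m α)
    (S : Fin (q + 1) → Fin (p + 2))
    (hS : ∀ α, (S α : ℕ) = ∑ β ∈ Finset.univ.filter (fun β => β < α), m β)
    (d : ℝ)
    (U : Set (Fin (p + 2) → ℝ)) (hUopen : IsOpen U) (hUconv : Convex ℝ U)
    (hUpos : ∀ u ∈ U, 0 < u 1)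
    (f : (Fin p → ℝ) → ℝ) (hf : ContDiff ℝ 1 f)
    (C₁ C₂ : ℝ) (hdC₁ : d * C₁ = 0)
    (H : (Fin (p + 2) → ℝ) → ℝ) (hH : ContDiffOn ℝ 2 H U)
    (hdH3 : ∀ u ∈ U, ∀ j : Fin p,
      pd H j.succ.succ u = (u 1) ^ (-d) * pd f j (zc p (q + 1) S u))
    (hdH2 : ∀ u ∈ U,
      pd H 1 u = (u 1) ^ (-d) *
        (-(∑ j, zc p (q + 1) S u j * pd f j (zc p (q + 1) S u))
          - (d - 1) * f (zc p (q + 1) S u) + C₂))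
    (hdH1 : ∀ u ∈ U,
      pd H 0 u = (u 1) ^ (-d) *
        (-(∑ j, eps p (q + 1) S j * pd f j (zc p (q + 1) S u)) + C₁)) :
    ∃ C₃ : ℝ, ∀ u ∈ U,
      H u = (u 1) ^ (1 - d) * f (zc p (q + 1) S u)
        + C₂ * (if d = 1 then Real.log (u 1) else (u 1) ^ (1 - d) / (1 - d))
        + C₁ * u 0 + C₃ := by
  classical
  set g : (Fin (p + 2) → ℝ) → ℝ := fun u =>
    (u 1) ^ (1 - d) * f (zc p (q + 1) S u)
      + C₂ * (if d = 1 then Real.log (u 1) else (u 1) ^ (1 - d) / (1 - d))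
      + C₁ * u 0 with hgdef
  have key : ∀ u ∈ U, HasFDerivAt (fun v => H v - g v) (0 : (Fin (p+2) → ℝ) →L[ℝ] ℝ) u := by
    intro u hu
    have h1pos : 0 < u 1 := hUpos u hu
    have h1ne : u 1 ≠ 0 := ne_of_gt h1pos
    set P : Fin (p+2) → ((Fin (p+2) → ℝ) →L[ℝ] ℝ) :=
      fun i => ContinuousLinearMap.proj i with hPdef
    set z : Fin p → ℝ := zc p (q + 1) S u with hzdef
    set F' : (Fin p → ℝ) →L[ℝ] ℝ := fderiv ℝ f z with hF'def
    -- derivative of the numerators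
    have hnum : ∀ j : Fin p,
        HasFDerivAt (fun v : Fin (p+2) → ℝ => v j.succ.succ - v 0 * eps p (q+1) S j)
          ((P j.succ.succ : (Fin (p+2) → ℝ) →L[ℝ] ℝ)
            - eps p (q+1) S j • (P 0 : (Fin (p+2) → ℝ) →L[ℝ] ℝ)) u := fun j =>
      (hasFDerivAt_apply j.succ.succ u).sub ((hasFDerivAt_apply 0 u).mul_const _)
    have hproj1 : HasFDerivAt (fun v : Fin (p+2) → ℝ => v 1)
        (P 1) u :=
      (P 1).hasFDerivAt
    have hinv : HasFDerivAt (fun v : Fin (p+2) → ℝ => (v 1)⁻¹)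
        ((-((u 1) ^ 2)⁻¹) • P 1) u :=
      (hasDerivAt_inv h1ne).comp_hasFDerivAt u hproj1
    set Z' : (Fin (p+2) → ℝ) →L[ℝ] (Fin p → ℝ) := ContinuousLinearMap.pi (fun j =>
      (u j.succ.succ - u 0 * eps p (q+1) S j) • ((-((u 1) ^ 2)⁻¹) • P 1)
        + (u 1)⁻¹ • (P j.succ.succ
            - eps p (q+1) S j • P 0)) with hZ'def
    have hzc : HasFDerivAt (zc p (q+1) S) Z' u := by
      rw [show zc p (q+1) S = fun (v : Fin (p+2) → ℝ) (j : Fin p) =>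
          (v j.succ.succ - v 0 * eps p (q+1) S j) * (v 1)⁻¹ by
        funext v j; rw [zc, div_eq_mul_inv]]
      exact hasFDerivAt_pi.2 fun j => (hnum j).mul hinv
    have hfz : HasFDerivAt (fun v => f (zc p (q+1) S v)) (F'.comp Z') u := by
      have hF : HasFDerivAt f F' z := (hf.differentiable one_ne_zero z).hasFDerivAt
      exact hF.comp u hzc
    have hpow : HasFDerivAt (fun v : Fin (p+2) → ℝ => (v 1) ^ (1-d))
        (((1-d) * (u 1) ^ (1-d-1)) • P 1) u :=
      by have := (Real.hasDerivAt_rpow_const (p := 1-d) (Or.inl h1ne)).comp_hasFDerivAt u hproj1; exact this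
    have ht1 : HasFDerivAt (fun v : Fin (p+2) → ℝ => (v 1) ^ (1-d) * f (zc p (q+1) S v))
        ((u 1) ^ (1-d) • (F'.comp Z')
          + f z • ((1-d) * (u 1) ^ (1-d-1)) • P 1) u :=
      hpow.mul hfz
    have ht2 : HasFDerivAt (fun v : Fin (p+2) → ℝ =>
        C₂ * (if d = 1 then Real.log (v 1) else (v 1) ^ (1-d) / (1-d)))
        ((C₂ * (u 1) ^ (-d)) • P 1) u := by
      by_cases hd : d = 1
      · simp only [if_pos hd]
        have hlog : HasFDerivAt (fun v : Fin (p+2) → ℝ => Real.log (v 1))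
            ((u 1)⁻¹ • P 1) u :=
          by have := (Real.hasDerivAt_log h1ne).comp_hasFDerivAt u hproj1; exact this
        have h2 := hlog.const_mul C₂
        refine h2.congr_fderiv (Eq.symm ?_)
        rw [smul_smul]
        congr 1
        rw [hd]
        rw [show (-(1:ℝ)) = (-1 : ℤ) by norm_num, Real.rpow_intCast]
        norm_num
      · simp only [if_neg hd]
        have h1md : (1:ℝ) - d ≠ 0 := sub_ne_zero.mpr (fun h => hd h.symm)
        have heq : (fun v : Fin (p+2) → ℝ => C₂ * ((v 1) ^ (1-d) / (1-d)))
            = fun v => (C₂ / (1-d)) * (v 1) ^ (1-d) := by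
          funext v; ring
        rw [heq]
        have h2 := hpow.const_mul (C₂ / (1-d))
        refine h2.congr_fderiv (Eq.symm ?_)
        rw [smul_smul]
        congr 1
        rw [show (1:ℝ)-d-1 = -d by ring]
        field_simp
    have ht3 : HasFDerivAt (fun v : Fin (p+2) → ℝ => C₁ * v 0)
        (C₁ • P 0) u := (hasFDerivAt_apply 0 u).const_mul C₁
    set Lg : (Fin (p+2) → ℝ) →L[ℝ] ℝ :=
      ((u 1) ^ (1-d) • (F'.comp Z')
          + f z • ((1-d) * (u 1) ^ (1-d-1)) • P 1)
        + (C₂ * (u 1) ^ (-d)) • P 1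
        + C₁ • P 0 with hLgdef
    have hgF : HasFDerivAt g Lg u := (ht1.add ht2).add ht3
    have hHd : DifferentiableAt ℝ H u :=
      (hH.contDiffAt (hUopen.mem_nhds hu)).differentiableAt (by norm_num)
    -- facts about powers
    have hpow1 : (u 1) ^ ((1:ℝ)-d) = (u 1) ^ (-d) * u 1 := by
      rw [show (1:ℝ)-d = -d+1 by ring, Real.rpow_add h1pos, Real.rpow_one]
    have hkey2 : (u 1) ^ ((1:ℝ)-d-1) = (u 1) ^ (-d) := by
      rw [show (1:ℝ)-d-1 = -d by ring]
    have hC₁ : (u 1) ^ (-d) * C₁ = C₁ := by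
      rcases mul_eq_zero.1 hdC₁ with h | h
      · simp [h]
      · simp [h]
    have hfd : ∀ j : Fin p, F' (Pi.single j 1) = pd f j z :=
      fun j => (pd_eq_fderiv f j z (hf.differentiable one_ne_zero z)).symm
    -- evaluation on basis vectors
    have hsingle : ∀ i : Fin (p+2), Lg (Pi.single i 1) = fderiv ℝ H u (Pi.single i 1) := by
      intro i
      rw [← pd_eq_fderiv H i u hHd]
      have hLapp : Lg (Pi.single i 1) =
          (u 1) ^ (1-d) * F' (Z' (Pi.single i 1))
            + f z * ((1-d) * (u 1) ^ (1-d-1) * (Pi.single i 1 : Fin (p+2) → ℝ) 1)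
            + C₂ * (u 1) ^ (-d) * (Pi.single i 1 : Fin (p+2) → ℝ) 1
            + C₁ * (Pi.single i 1 : Fin (p+2) → ℝ) 0 := by
        simp [hLgdef, hPdef, ContinuousLinearMap.add_apply, ContinuousLinearMap.smul_apply,
          ContinuousLinearMap.comp_apply, ContinuousLinearMap.proj_apply, smul_eq_mul]
      have hZapp : ∀ j : Fin p, Z' (Pi.single i 1) j =
          (u j.succ.succ - u 0 * eps p (q+1) S j) * (-((u 1) ^ 2)⁻¹ * (Pi.single i 1 : Fin (p+2) → ℝ) 1)
            + (u 1)⁻¹ * ((Pi.single i 1 : Fin (p+2) → ℝ) j.succ.succ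
                - eps p (q+1) S j * (Pi.single i 1 : Fin (p+2) → ℝ) 0) := by
        intro j
        simp [hZ'def, hPdef, ContinuousLinearMap.pi_apply, ContinuousLinearMap.add_apply,
          ContinuousLinearMap.smul_apply, ContinuousLinearMap.sub_apply,
          ContinuousLinearMap.proj_apply, smul_eq_mul]
      have hFZ : F' (Z' (Pi.single i 1)) = ∑ j, Z' (Pi.single i 1) j * pd f j z := by
        rw [clm_sum F' (Z' (Pi.single i 1))]
        exact Finset.sum_congr rfl fun j _ => by rw [hfd j]
      have tri : i = 0 ∨ i = 1 ∨ ∃ j : Fin p, i = j.succ.succ := by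
        by_cases h0 : (i : ℕ) = 0
        · exact Or.inl (Fin.ext (by simpa using h0))
        by_cases h1 : (i : ℕ) = 1
        · exact Or.inr (Or.inl (Fin.ext (by simp [h1, Fin.val_one])))
        · refine Or.inr (Or.inr ?_)
          have hlt : (i : ℕ) - 2 < p := by have := i.isLt; omega
          exact ⟨⟨(i : ℕ) - 2, hlt⟩, Fin.ext (by simp [Fin.val_succ]; omega)⟩
      rcases tri with rfl | rfl | ⟨j, rfl⟩
      ·
        have e00 : (Pi.single (0 : Fin (p+2)) 1 : Fin (p+2) → ℝ) 0 = 1 := Pi.single_eq_same 0 1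
        have e01 : (Pi.single (0 : Fin (p+2)) 1 : Fin (p+2) → ℝ) 1 = 0 :=
          Pi.single_eq_of_ne (by simp [Fin.ext_iff]) 1
        have e0j : ∀ j : Fin p, (Pi.single (0 : Fin (p+2)) 1 : Fin (p+2) → ℝ) j.succ.succ = 0 :=
          fun j => Pi.single_eq_of_ne (Fin.succ_ne_zero _) 1
        rw [hLapp, hFZ, hdH1 u hu, e00, e01]
        have : ∀ j : Fin p, Z' (Pi.single (0 : Fin (p+2)) 1) j * pd f j z
            = -(eps p (q+1) S j * pd f j z) * (u 1)⁻¹ := by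
          intro j; rw [hZapp j, e00, e01, e0j j]; ring
        rw [Finset.sum_congr rfl fun j _ => this j, ← hzdef]
        rw [← Finset.sum_mul, Finset.sum_neg_distrib, hpow1, mul_add, hC₁]
        field_simp
        ring
      ·
          have e11 : (Pi.single (1 : Fin (p+2)) 1 : Fin (p+2) → ℝ) 1 = 1 := Pi.single_eq_same 1 1
          have e10 : (Pi.single (1 : Fin (p+2)) 1 : Fin (p+2) → ℝ) 0 = 0 :=
            Pi.single_eq_of_ne (by simp [Fin.ext_iff]) 1
          have e1j : ∀ j : Fin p, (Pi.single (1 : Fin (p+2)) 1 : Fin (p+2) → ℝ) j.succ.succ = 0 :=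
            fun j => Pi.single_eq_of_ne (by simp [Fin.ext_iff]) 1
          rw [hLapp, hFZ, hdH2 u hu, e11, e10]
          have : ∀ j : Fin p, Z' (Pi.single (1 : Fin (p+2)) 1) j * pd f j z
              = -(z j * pd f j z) * (u 1)⁻¹ := by
            intro j
            rw [hZapp j, e11, e10, e1j j]
            have : z j = (u j.succ.succ - u 0 * eps p (q+1) S j) / u 1 := rfl
            rw [this]
            field_simp
            ring
          rw [Finset.sum_congr rfl fun j _ => this j, ← hzdef]
          rw [← Finset.sum_mul, Finset.sum_neg_distrib, hpow1, hkey2]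
          field_simp
          ring
      ·
          have eji : ∀ j' : Fin p, (Pi.single (j.succ.succ : Fin (p+2)) 1 : Fin (p+2) → ℝ) j'.succ.succ
              = if j' = j then 1 else 0 := by
            intro j'
            by_cases h : j' = j
            · subst h; simp
            · rw [if_neg h]
              refine Pi.single_eq_of_ne ?_ 1
              have hv : (j' : ℕ) ≠ (j : ℕ) := fun hh => h (Fin.ext hh)
              simp only [ne_eq, Fin.ext_iff, Fin.val_succ]
              omega
          have ej1 : (Pi.single (j.succ.succ : Fin (p+2)) 1 : Fin (p+2) → ℝ) 1 = 0 :=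
            Pi.single_eq_of_ne (by simp [Fin.ext_iff, Fin.val_succ]) 1
          have ej0 : (Pi.single (j.succ.succ : Fin (p+2)) 1 : Fin (p+2) → ℝ) 0 = 0 :=
            Pi.single_eq_of_ne (by simp [Fin.ext_iff, Fin.val_succ]) 1
          rw [hLapp, hFZ, hdH3 u hu j, ej1, ej0]
          have : ∀ j' : Fin p, Z' (Pi.single (j.succ.succ : Fin (p+2)) 1) j' * pd f j' z
              = (if j' = j then (u 1)⁻¹ * pd f j' z else 0) := by
            intro j'
            rw [hZapp j', ej1, ej0, eji j']
            by_cases h : j' = j <;> simp [h] <;> ring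
          rw [Finset.sum_congr rfl fun j' _ => this j', Finset.sum_ite_eq' Finset.univ j]
          simp only [Finset.mem_univ, if_pos]
          rw [← hzdef, hpow1]
          field_simp
          ring
    have hzero : fderiv ℝ H u - Lg = 0 := by
      apply ContinuousLinearMap.ext
      intro v
      rw [ContinuousLinearMap.sub_apply, ContinuousLinearMap.zero_apply,
        clm_sum (fderiv ℝ H u) v, clm_sum Lg v]
      rw [sub_eq_zero]
      exact Finset.sum_congr rfl fun i _ => by rw [hsingle i]
    have hsub := hHd.hasFDerivAt.sub hgF
    rwa [hzero] at hsub
  rcases Set.eq_empty_or_nonempty U with hU | ⟨u₀, hu₀⟩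
  · exact ⟨0, by simp [hU]⟩
  refine ⟨H u₀ - g u₀, ?_⟩
  intro u hu
  have hb := Convex.norm_image_sub_le_of_norm_hasFDerivWithin_le
    (f' := fun _ => (0 : (Fin (p+2) → ℝ) →L[ℝ] ℝ)) (C := 0)
    (fun x hx => (key x hx).hasFDerivWithinAt) (fun x hx => by simp) hUconv hu₀ hu
  rw [mul_comm, mul_zero] at hb
  have hconst : H u - g u = H u₀ - g u₀ := by
    have := norm_le_zero_iff.mp hb
    have h2 : (H u - g u) - (H u₀ - g u₀) = 0 := this
    linarith
  have hgu : g u = (u 1) ^ (1 - d) * f (zc p (q + 1) S u)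
      + C₂ * (if d = 1 then Real.log (u 1) else (u 1) ^ (1 - d) / (1 - d))
      + C₁ * u 0 := rfl
  rw [← hgu]
  linarith
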